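/- For the poset algebra A_𝒫 with coproduct Δ(P) = Σ_{x ∈ P, x ≠ 1_P} (−∞, x]_P ⊗ [x, +∞)_P (extended as a multiplier), Δ is a derivation: Δ(P*Q) = Δ(P)(1 ⊗ Q) + (P ⊗ 1)Δ(Q) for all basis elements P, Q. -/

import Mathlib

variable (L : Type*) [PartialOrder L]

/-- A finite subposet of `L` possessing a greatest and a least element. -/
structure SubPoset where
  carrier : Finset L
  top : L
  bot : L
  top_mem : top ∈ carrier
  bot_mem : bot ∈ carrier
  le_top : ∀ x ∈ carrier, x ≤ top
  bot_le : ∀ x ∈ carrier, bot ≤ x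

variable {L} [DecidableEq L]

/-- The union `P ∪ Q`, when `1_P = 0_Q`, as an element of `𝒫`. -/
def SubPoset.union (P Q : SubPoset L) (h : P.top = Q.bot) : SubPoset L where
  carrier := P.carrier ∪ Q.carrier
  top := Q.top
  bot := P.bot
  top_mem := Finset.mem_union_right _ Q.top_mem
  bot_mem := Finset.mem_union_left _ P.bot_mem
  le_top := fun x hx => by
    rcases Finset.mem_union.mp hx with h1 | h1
    · exact le_trans (P.le_top x h1) (h ▸ Q.bot_le Q.top Q.top_mem)
    · exact Q.le_top x h1
  bot_le := fun x hx => by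
    rcases Finset.mem_union.mp hx with h1 | h1
    · exact P.bot_le x h1
    · exact le_trans (h ▸ P.bot_le P.top P.top_mem) (Q.bot_le x h1)

variable (k : Type*) [Field k]

/-- Product of two basis elements of the poset algebra `A_𝒫`. -/
noncomputable def mulBasis (P Q : SubPoset L) : SubPoset L →₀ k :=
  if h : P.top = Q.bot then Finsupp.single (P.union Q h) 1 else 0

/-- The bilinear product of the poset algebra `A_𝒫`. -/
noncomputable def mulA (f g : SubPoset L →₀ k) : SubPoset L →₀ k :=
  f.sum fun P a => g.sum fun Q b => (a * b) • mulBasis k P Q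

open scoped TensorProduct

variable [DecidableRel (α := L) (· ≤ ·)]

/-- The down-interval `(−∞, x]_P`, for `x ∈ P`. -/
def down (P : SubPoset L) (x : L) (hx : x ∈ P.carrier) : SubPoset L :=
  ⟨P.carrier.filter (· ≤ x), x, P.bot,
    Finset.mem_filter.mpr ⟨hx, le_refl x⟩,
    Finset.mem_filter.mpr ⟨P.bot_mem, P.bot_le x hx⟩,
    fun y hy => (Finset.mem_filter.mp hy).2,
    fun y hy => P.bot_le y (Finset.mem_filter.mp hy).1⟩

/-- The up-interval `[x, +∞)_P`, for `x ∈ P`. -/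
def up (P : SubPoset L) (x : L) (hx : x ∈ P.carrier) : SubPoset L :=
  ⟨P.carrier.filter (x ≤ ·), P.top, x,
    Finset.mem_filter.mpr ⟨P.top_mem, P.le_top x hx⟩,
    Finset.mem_filter.mpr ⟨hx, le_refl x⟩,
    fun y hy => P.le_top y (Finset.mem_filter.mp hy).1,
    fun y hy => (Finset.mem_filter.mp hy).2⟩

/-- `P₀ = P \ {1_P}`. -/
def P₀ (P : SubPoset L) : Finset L := P.carrier.filter (· ≠ P.top)

/-- The coproduct on a basis element: `Δ(P) = Σ_{x ∈ P₀} (−∞,x]_P ⊗ [x,+∞)_P`. -/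
noncomputable def ΔB (P : SubPoset L) :
    (SubPoset L →₀ k) ⊗[k] (SubPoset L →₀ k) :=
  ∑ x ∈ (P₀ P).attach,
    Finsupp.single (down P x.1 (Finset.mem_of_mem_filter _ x.2)) (1 : k) ⊗ₜ[k]
      Finsupp.single (up P x.1 (Finset.mem_of_mem_filter _ x.2)) (1 : k)

/-- The zero element of `A_𝒫 ⊗ A_𝒫` (given explicitly to help instance resolution). -/
noncomputable def tensorZero : (SubPoset L →₀ k) ⊗[k] (SubPoset L →₀ k) :=
  (AddMonoid.toZero (M := (SubPoset L →₀ k) ⊗[k] (SubPoset L →₀ k))).zero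

theorem SubPoset.ext' {P Q : SubPoset L} (hc : P.carrier = Q.carrier)
    (ht : P.top = Q.top) (hb : P.bot = Q.bot) : P = Q := by
  cases P; cases Q
  dsimp at hc ht hb
  subst hc; subst ht; subst hb; rfl

/-- Total version of the summand of `ΔB`. -/
noncomputable def dterm (R : SubPoset L) (x : L) :
    (SubPoset L →₀ k) ⊗[k] (SubPoset L →₀ k) :=
  if hx : x ∈ R.carrier then
    Finsupp.single (down R x hx) (1 : k) ⊗ₜ[k] Finsupp.single (up R x hx) (1 : k)
  else tensorZero k

/-- Total version of the summand of the left sum. -/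
noncomputable def dtermL (P Q : SubPoset L) (x : L) :
    (SubPoset L →₀ k) ⊗[k] (SubPoset L →₀ k) :=
  if hx : x ∈ P.carrier then
    Finsupp.single (down P x hx) (1 : k) ⊗ₜ[k] mulBasis k (up P x hx) Q
  else tensorZero k

/-- Total version of the summand of the right sum. -/
noncomputable def dtermR (P Q : SubPoset L) (x : L) :
    (SubPoset L →₀ k) ⊗[k] (SubPoset L →₀ k) :=
  if hx : x ∈ Q.carrier then
    mulBasis k P (down Q x hx) ⊗ₜ[k] Finsupp.single (up Q x hx) (1 : k)
  else tensorZero k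

theorem ΔB_eq_sum (R : SubPoset L) : ΔB k R = ∑ x ∈ P₀ R, dterm k R x := by
  rw [ΔB, ← Finset.sum_attach (P₀ R) (dterm k R)]
  refine Finset.sum_congr rfl fun x _ => ?_
  rw [dterm, dif_pos (Finset.mem_of_mem_filter _ x.2)]

theorem sumL_eq (P Q : SubPoset L) :
    (∑ x ∈ (P₀ P).attach,
      Finsupp.single (down P x.1 (Finset.mem_of_mem_filter _ x.2)) (1 : k) ⊗ₜ[k]
        mulBasis k (up P x.1 (Finset.mem_of_mem_filter _ x.2)) Q) =
    ∑ x ∈ P₀ P, dtermL k P Q x := by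
  rw [← Finset.sum_attach (P₀ P) (dtermL k P Q)]
  refine Finset.sum_congr rfl fun x _ => ?_
  rw [dtermL, dif_pos (Finset.mem_of_mem_filter _ x.2)]

theorem sumR_eq (P Q : SubPoset L) :
    (∑ x ∈ (P₀ Q).attach,
      mulBasis k P (down Q x.1 (Finset.mem_of_mem_filter _ x.2)) ⊗ₜ[k]
        Finsupp.single (up Q x.1 (Finset.mem_of_mem_filter _ x.2)) (1 : k)) =
    ∑ x ∈ P₀ Q, dtermR k P Q x := by
  rw [← Finset.sum_attach (P₀ Q) (dtermR k P Q)]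
  refine Finset.sum_congr rfl fun x _ => ?_
  rw [dtermR, dif_pos (Finset.mem_of_mem_filter _ x.2)]

section Union

variable {P Q : SubPoset L}

theorem inter_eq_top (h : P.top = Q.bot) {y : L} (hyP : y ∈ P.carrier) (hyQ : y ∈ Q.carrier) :
    y = P.top :=
  le_antisymm (P.le_top y hyP) (h ▸ Q.bot_le y hyQ)

theorem P₀_union (h : P.top = Q.bot) : P₀ (P.union Q h) = P₀ P ∪ P₀ Q := by
  ext y
  simp only [P₀, Finset.mem_filter, Finset.mem_union]
  simp only [SubPoset.union, Finset.mem_union]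
  constructor
  · rintro ⟨hyPQ | hyQ, hne⟩
    · by_cases hyQ' : y ∈ Q.carrier
      · exact Or.inr ⟨hyQ', hne⟩
      · refine Or.inl ⟨hyPQ, fun hy => hyQ' ?_⟩
        rw [hy, h]; exact Q.bot_mem
    · exact Or.inr ⟨hyQ, hne⟩
  · rintro (⟨hyP, hne⟩ | ⟨hyQ, hne⟩)
    · refine ⟨Or.inl hyP, fun hy => hne ?_⟩
      exact inter_eq_top h hyP (hy ▸ Q.top_mem)
    · exact ⟨Or.inr hyQ, hne⟩

theorem P₀_disjoint (h : P.top = Q.bot) : Disjoint (P₀ P) (P₀ Q) := by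
  rw [Finset.disjoint_left]
  rintro y hyP hyQ
  rw [P₀, Finset.mem_filter] at hyP hyQ
  exact hyP.2 (inter_eq_top h hyP.1 hyQ.1)

theorem down_union_left (h : P.top = Q.bot) {x : L} (hx : x ∈ P.carrier) (hne : x ≠ P.top)
    (hx' : x ∈ (P.union Q h).carrier) :
    down (P.union Q h) x hx' = down P x hx := by
  refine SubPoset.ext' ?_ rfl rfl
  ext y
  simp only [down, SubPoset.union, Finset.mem_filter, Finset.mem_union]
  constructor
  · rintro ⟨hyPQ | hyQ, hyx⟩
    · exact ⟨hyPQ, hyx⟩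
    · exfalso
      apply hne
      have h1 : P.top ≤ y := h ▸ Q.bot_le y hyQ
      have h2 : x ≤ P.top := P.le_top x hx
      exact le_antisymm h2 (le_trans h1 hyx)
  · rintro ⟨hyP, hyx⟩
    exact ⟨Or.inl hyP, hyx⟩

theorem up_union_left (h : P.top = Q.bot) {x : L} (hx : x ∈ P.carrier)
    (hx' : x ∈ (P.union Q h).carrier) :
    up (P.union Q h) x hx' = (up P x hx).union Q h := by
  refine SubPoset.ext' ?_ rfl rfl
  ext y
  simp only [up, SubPoset.union, Finset.mem_filter, Finset.mem_union]
  constructor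
  · rintro ⟨hyPQ | hyQ, hxy⟩
    · exact Or.inl ⟨hyPQ, hxy⟩
    · exact Or.inr hyQ
  · rintro (⟨hyP, hxy⟩ | hyQ)
    · exact ⟨Or.inl hyP, hxy⟩
    · exact ⟨Or.inr hyQ, le_trans (P.le_top x hx) (h ▸ Q.bot_le y hyQ)⟩

theorem up_union_right (h : P.top = Q.bot) {x : L} (hx : x ∈ Q.carrier)
    (hx' : x ∈ (P.union Q h).carrier) :
    up (P.union Q h) x hx' = up Q x hx := by
  refine SubPoset.ext' ?_ rfl rfl
  ext y
  simp only [up, SubPoset.union, Finset.mem_filter, Finset.mem_union]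
  constructor
  · rintro ⟨hyPQ | hyQ, hxy⟩
    · have : y = P.top := le_antisymm (P.le_top y hyPQ)
        (le_trans (h ▸ Q.bot_le x hx) hxy)
      exact ⟨this ▸ h ▸ Q.bot_mem, hxy⟩
    · exact ⟨hyQ, hxy⟩
  · rintro ⟨hyQ, hxy⟩
    exact ⟨Or.inr hyQ, hxy⟩

theorem down_union_right (h : P.top = Q.bot) {x : L} (hx : x ∈ Q.carrier)
    (hx' : x ∈ (P.union Q h).carrier) :
    down (P.union Q h) x hx' = P.union (down Q x hx) h := by
  refine SubPoset.ext' ?_ rfl rfl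
  ext y
  simp only [down, SubPoset.union, Finset.mem_filter, Finset.mem_union]
  constructor
  · rintro ⟨hyPQ | hyQ, hyx⟩
    · exact Or.inl hyPQ
    · exact Or.inr ⟨hyQ, hyx⟩
  · rintro (hyP | ⟨hyQ, hyx⟩)
    · exact ⟨Or.inl hyP, le_trans (P.le_top y hyP) (h ▸ Q.bot_le x hx)⟩
    · exact ⟨Or.inr hyQ, hyx⟩

end Union

/-- `Δ` is a derivation, i.e. `Δ(P*Q) = Δ(P)(1 ⊗ Q) + (P ⊗ 1)Δ(Q)`:
if `1_P = 0_Q` then `Δ(P ∪ Q)` equals the sum of the two expanded sums, and otherwise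
both sides vanish. -/
theorem posetAlgebra_coproduct_derivation (P Q : SubPoset L) :
    (∀ h : P.top = Q.bot,
      ΔB k (P.union Q h) =
        (∑ x ∈ (P₀ P).attach,
          Finsupp.single (down P x.1 (Finset.mem_of_mem_filter _ x.2)) (1 : k) ⊗ₜ[k]
            mulBasis k (up P x.1 (Finset.mem_of_mem_filter _ x.2)) Q) +
        (∑ x ∈ (P₀ Q).attach,
          mulBasis k P (down Q x.1 (Finset.mem_of_mem_filter _ x.2)) ⊗ₜ[k]
            Finsupp.single (up Q x.1 (Finset.mem_of_mem_filter _ x.2)) (1 : k))) ∧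
    (P.top ≠ Q.bot →
      (∑ x ∈ (P₀ P).attach,
          Finsupp.single (down P x.1 (Finset.mem_of_mem_filter _ x.2)) (1 : k) ⊗ₜ[k]
            mulBasis k (up P x.1 (Finset.mem_of_mem_filter _ x.2)) Q) +
        (∑ x ∈ (P₀ Q).attach,
          mulBasis k P (down Q x.1 (Finset.mem_of_mem_filter _ x.2)) ⊗ₜ[k]
            Finsupp.single (up Q x.1 (Finset.mem_of_mem_filter _ x.2)) (1 : k)) =
        tensorZero k) := by
  constructor
  · intro h
    rw [ΔB_eq_sum, sumL_eq, sumR_eq, P₀_union h, Finset.sum_union (P₀_disjoint h)]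
    congr 1
    · refine Finset.sum_congr rfl fun x hx => ?_
      rw [P₀, Finset.mem_filter] at hx
      obtain ⟨hxP, hne⟩ := hx
      have hxU : x ∈ (P.union Q h).carrier := Finset.mem_union_left _ hxP
      rw [dterm, dif_pos hxU, dtermL, dif_pos hxP,
        down_union_left h hxP hne hxU, up_union_left h hxP hxU,
        mulBasis, dif_pos (show (up P x hxP).top = Q.bot from h)]
    · refine Finset.sum_congr rfl fun x hx => ?_
      rw [P₀, Finset.mem_filter] at hx
      obtain ⟨hxQ, hne⟩ := hx
      have hxU : x ∈ (P.union Q h).carrier := Finset.mem_union_right _ hxQ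
      rw [dterm, dif_pos hxU, dtermR, dif_pos hxQ,
        down_union_right h hxQ hxU, up_union_right h hxQ hxU,
        mulBasis, dif_pos (show P.top = (down Q x hxQ).bot from h)]
  · intro h
    have h1 : ∀ x ∈ (P₀ P).attach,
        (Finsupp.single (down P x.1 (Finset.mem_of_mem_filter _ x.2)) (1 : k) ⊗ₜ[k]
          mulBasis k (up P x.1 (Finset.mem_of_mem_filter _ x.2)) Q) =
        tensorZero k := by
      intro x _
      rw [mulBasis, dif_neg (show ¬(up P x.1 _).top = Q.bot from h), TensorProduct.tmul_zero]
      rfl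
    have h2 : ∀ x ∈ (P₀ Q).attach,
        (mulBasis k P (down Q x.1 (Finset.mem_of_mem_filter _ x.2)) ⊗ₜ[k]
          Finsupp.single (up Q x.1 (Finset.mem_of_mem_filter _ x.2)) (1 : k)) =
        tensorZero k := by
      intro x _
      rw [mulBasis, dif_neg (show ¬P.top = (down Q x.1 _).bot from h), TensorProduct.zero_tmul]
      rfl
    rw [Finset.sum_congr rfl h1, Finset.sum_congr rfl h2]
    have e1 : (∑ _x ∈ (P₀ P).attach,
        (tensorZero k : (SubPoset L →₀ k) ⊗[k] (SubPoset L →₀ k))) = tensorZero k :=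
      Finset.sum_const_zero
    have e2 : (∑ _x ∈ (P₀ Q).attach,
        (tensorZero k : (SubPoset L →₀ k) ⊗[k] (SubPoset L →₀ k))) = tensorZero k :=
      Finset.sum_const_zero
    rw [e1, e2]
    exact add_zero _
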